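/- Let h ∼ CN(0, R) be a K-dimensional circularly-symmetric complex Gaussian vector where R has rank r with positive eigenvalues λ₁,…,λ_r, and let γ* = max_{k=1..K} |h_k|². Then as γ̄ → ∞, P(γ̄·γ* < γ_th) = O(γ̄^{−r}·γ_th^{r}/∏_{i=1}^r λ_i); in particular the diversity order (the exponent of the outage-probability decay in γ̄) equals r = rank(R). -/

import Mathlib

open MeasureTheory ProbabilityTheory Filter Asymptotics
open scoped ComplexOrder

/-- The circularly-symmetric complex Gaussian distribution `CN(0, v)`:
independent real and imaginary parts, each `N(0, v/2)`. -/
noncomputable def complexGaussian (v : NNReal) : Measure ℂ :=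
  ((gaussianReal 0 (v / 2)).prod (gaussianReal 0 (v / 2))).map
    Complex.measurableEquivRealProd.symm

namespace Stmt19Aux

open scoped ENNReal

instance (v : NNReal) : IsProbabilityMeasure (complexGaussian v) := by
  unfold complexGaussian
  exact Measure.isProbabilityMeasure_map Complex.measurableEquivRealProd.symm.measurable.aemeasurable

/-- map of withDensity under a measurable equivalence. -/
lemma map_withDensity_equiv {α β : Type*} [MeasurableSpace α] [MeasurableSpace β]
    (e : α ≃ᵐ β) (μ : Measure α) (f : β → ℝ≥0∞) (hf : Measurable f) :
    Measure.map e (μ.withDensity (fun a => f (e a))) = (Measure.map e μ).withDensity f := by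
  ext s hs
  rw [Measure.map_apply e.measurable hs, withDensity_apply _ hs,
    withDensity_apply _ (e.measurable hs), setLIntegral_map hs hf e.measurable]

/-- the one-dimensional density of `complexGaussian 1`. -/
noncomputable def f1 : ℂ → ℝ≥0∞ :=
  fun z => ENNReal.ofReal (Real.pi⁻¹ * Real.exp (-(‖z‖ ^ 2)))

lemma f1_meas : Measurable f1 := by
  apply Measurable.ennreal_ofReal
  exact (continuous_const.mul ((Real.continuous_exp.comp
    (continuous_neg.comp ((continuous_norm.pow 2)))))).measurable

lemma gaussianPDF_half (x : ℝ) :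
    gaussianPDF 0 (1/2) x = ENNReal.ofReal ((Real.sqrt Real.pi)⁻¹ * Real.exp (-(x^2))) := by
  rw [gaussianPDF_def]
  congr 1
  unfold gaussianPDFReal
  have h2 : ((1/2 : NNReal) : ℝ) = 1/2 := by norm_num
  rw [h2, show (2 : ℝ) * Real.pi * (1/2) = Real.pi by ring,
      show (2 : ℝ) * (1/2 : ℝ) = 1 by norm_num]
  norm_num

lemma gaussianPDF_half_le_one (x : ℝ) : gaussianPDF 0 (1/2) x ≤ 1 := by
  rw [gaussianPDF_half]
  rw [show (1 : ℝ≥0∞) = ENNReal.ofReal 1 by simp]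
  apply ENNReal.ofReal_le_ofReal
  have h1 : (Real.sqrt Real.pi)⁻¹ ≤ 1 := by
    rw [inv_le_one_iff₀]
    right
    rw [show (1:ℝ) = Real.sqrt 1 by simp]
    exact Real.sqrt_le_sqrt (by nlinarith [Real.pi_gt_three])
  have h2 : Real.exp (-(x^2)) ≤ 1 := Real.exp_le_one_iff.mpr (by nlinarith [sq_nonneg x])
  nlinarith [Real.exp_pos (-(x^2)), Real.sqrt_nonneg Real.pi,
    inv_nonneg.mpr (Real.sqrt_nonneg Real.pi)]

/-- density representation of the standard complex Gaussian. -/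
lemma complexGaussian_one_eq :
    complexGaussian 1 = (volume : Measure ℂ).withDensity f1 := by
  have hv : ((1 : NNReal)/2 : NNReal) ≠ 0 := by norm_num
  have hG : gaussianReal 0 ((1 : NNReal)/2) = volume.withDensity (gaussianPDF 0 (1/2)) :=
    gaussianReal_of_var_ne_zero 0 hv
  have hprod : (gaussianReal 0 ((1 : NNReal)/2)).prod (gaussianReal 0 ((1 : NNReal)/2))
      = (volume : Measure (ℝ × ℝ)).withDensity
          (fun p => f1 (Complex.measurableEquivRealProd.symm p)) := by
    have hF : (fun p : ℝ × ℝ => f1 (Complex.measurableEquivRealProd.symm p))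
        = fun p => gaussianPDF 0 (1/2) p.1 * gaussianPDF 0 (1/2) p.2 := by
      funext p
      rw [gaussianPDF_half, gaussianPDF_half, ← ENNReal.ofReal_mul (by positivity)]
      unfold f1
      congr 1
      rw [Complex.sq_norm, Complex.measurableEquivRealProd_symm_apply, Complex.normSq_mk]
      rw [show Real.exp (-(p.1*p.1 + p.2*p.2)) = Real.exp (-(p.1^2)) * Real.exp (-(p.2^2)) by
        rw [← Real.exp_add]; ring_nf]
      have : (Real.sqrt Real.pi)⁻¹ * (Real.sqrt Real.pi)⁻¹ = Real.pi⁻¹ := by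
        rw [← mul_inv, Real.mul_self_sqrt Real.pi_pos.le]
      ring_nf
      rw [← this]
      ring
    rw [hF]
    refine Measure.prod_eq (fun s t hs ht => ?_)
    rw [MeasureTheory.Measure.volume_eq_prod,
      withDensity_apply _ (hs.prod ht), ← Measure.prod_restrict,
      lintegral_prod_mul (measurable_gaussianPDF 0 (1/2)).aemeasurable
        (measurable_gaussianPDF 0 (1/2)).aemeasurable,
      hG, withDensity_apply _ hs, withDensity_apply _ ht]
  unfold complexGaussian
  rw [show ((1 : NNReal)/2 : NNReal) = (1 : NNReal)/2 from rfl] at hprod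
  rw [hprod, map_withDensity_equiv Complex.measurableEquivRealProd.symm _ f1 f1_meas,
    (MeasurePreserving.symm _ Complex.volume_preserving_equiv_real_prod).map_eq]

lemma sigmaFinite_wd : SigmaFinite ((volume : Measure ℂ).withDensity f1) := by
  rw [← complexGaussian_one_eq]; infer_instance

/-- pull a constant out of a marginal integral. -/
lemma lmarginal_const_mul {ι : Type*} [DecidableEq ι] {α : Type*} [MeasurableSpace α]
    (μ : Measure α) (c : ℝ≥0∞) {F : (ι → α) → ℝ≥0∞} (hF : Measurable F)
    (s : Finset ι) (x : ι → α) :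
    (∫⋯∫⁻_s, (fun y => c * F y) ∂(fun _ => μ)) x = c * (∫⋯∫⁻_s, F ∂(fun _ => μ)) x := by
  unfold MeasureTheory.lmarginal
  exact lintegral_const_mul c (hF.comp measurable_updateFinset)

lemma lmarginal_prod {ι : Type*} [DecidableEq ι] {α : Type*} [MeasurableSpace α]
    (μ : Measure α) [SigmaFinite μ] (g : ι → α → ℝ≥0∞) (hg : ∀ i, Measurable (g i)) :
    ∀ (s : Finset ι) (x : ι → α),
      (∫⋯∫⁻_s, (fun y => ∏ i ∈ s, g i (y i)) ∂(fun _ => μ)) x = ∏ i ∈ s, ∫⁻ a, g i a ∂μ := by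
  intro s
  have hmeas : ∀ (t : Finset ι), Measurable fun y : ι → α => ∏ i ∈ t, g i (y i) :=
    fun t => Finset.measurable_prod _ (fun i _ => (hg i).comp (measurable_pi_apply i))
  induction s using Finset.induction with
  | empty => intro x; simp
  | @insert j s hj ih =>
    intro x
    rw [lmarginal_insert _ (hmeas _) hj]
    have key : ∀ t : α, (∫⋯∫⁻_s, (fun y => ∏ i ∈ insert j s, g i (y i)) ∂(fun _ => μ))
        (Function.update x j t) = g j t * ∏ i ∈ s, ∫⁻ a, g i a ∂μ := by
      intro t
      rw [lmarginal_update_of_notMem (hmeas _) hj]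
      have hfun : ((fun y : ι → α => ∏ i ∈ insert j s, g i (y i)) ∘
          (fun y => Function.update y j t))
          = fun y => g j t * ∏ i ∈ s, g i (y i) := by
        funext y
        simp only [Function.comp_apply]
        rw [Finset.prod_insert hj, Function.update_self]
        congr 1
        refine Finset.prod_congr rfl fun i hi => ?_
        rw [Function.update_of_ne (ne_of_mem_of_not_mem hi hj)]
      rw [hfun, lmarginal_const_mul μ _ (hmeas s), ih]
    simp_rw [key]
    rw [lintegral_mul_const _ (hg j), Finset.prod_insert hj]

lemma lintegral_pi_prod {ι : Type*} [Fintype ι] [DecidableEq ι] {α : Type*} [MeasurableSpace α]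
    [Nonempty α] (μ : Measure α) [SigmaFinite μ] (g : ι → α → ℝ≥0∞)
    (hg : ∀ i, Measurable (g i)) :
    ∫⁻ x, ∏ i, g i (x i) ∂(Measure.pi fun _ : ι => μ) = ∏ i, ∫⁻ a, g i a ∂μ := by
  rw [lintegral_eq_lmarginal_univ (Classical.arbitrary (ι → α))]
  exact lmarginal_prod μ g hg Finset.univ _

/-- pi of a fixed withDensity measure. -/
lemma pi_withDensity {ι : Type*} [Fintype ι] {α : Type*} [MeasurableSpace α] [Nonempty α]
    (μ : Measure α) [SigmaFinite μ] (f : α → ℝ≥0∞) (hf : Measurable f)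
    (hsf : SigmaFinite (μ.withDensity f)) :
    Measure.pi (fun _ : ι => μ.withDensity f) =
      (Measure.pi fun _ : ι => μ).withDensity (fun x => ∏ i, f (x i)) := by
  classical
  refine Measure.pi_eq (fun s hs => ?_)
  rw [withDensity_apply _ (MeasurableSet.univ_pi hs)]
  calc ∫⁻ x in Set.pi Set.univ s, ∏ i, f (x i) ∂(Measure.pi fun _ => μ)
      = ∫⁻ x, ∏ i, (s i).indicator f (x i) ∂(Measure.pi fun _ => μ) := by
        rw [← lintegral_indicator (MeasurableSet.univ_pi hs)]
        congr 1; funext x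
        by_cases hx : x ∈ Set.pi Set.univ s
        · rw [Set.indicator_of_mem hx]
          exact Finset.prod_congr rfl fun i _ =>
            (Set.indicator_of_mem (hx i (Set.mem_univ i)) f).symm
        · rw [Set.indicator_of_notMem hx]
          rw [Set.mem_univ_pi] at hx
          push_neg at hx
          obtain ⟨i, hi⟩ := hx
          exact (Finset.prod_eq_zero (Finset.mem_univ i)
            (Set.indicator_of_notMem hi f)).symm
    _ = ∏ i, ∫⁻ a, (s i).indicator f a ∂μ :=
        lintegral_pi_prod μ _ (fun i => hf.indicator (hs i))
    _ = ∏ i, (μ.withDensity f) (s i) := by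
        refine Finset.prod_congr rfl fun i _ => ?_
        rw [lintegral_indicator (hs i), withDensity_apply _ (hs i)]

section Invariance

variable {K : ℕ}

/-- sum of squared moduli as a complex dot product. -/
lemma dot_self_eq (v : Fin K → ℂ) :
    dotProduct (star v) v = ((∑ i, ‖v i‖ ^ 2 : ℝ) : ℂ) := by
  simp only [dotProduct, Pi.star_apply, RCLike.star_def]
  push_cast
  refine Finset.sum_congr rfl fun i _ => ?_
  rw [Complex.conj_mul']

lemma sum_sq_mulVec_unitary (W : Matrix (Fin K) (Fin K) ℂ)
    (hW : W ∈ Matrix.unitaryGroup (Fin K) ℂ) (y : Fin K → ℂ) :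
    ∑ i, ‖W.mulVec y i‖ ^ 2 = ∑ i, ‖y i‖ ^ 2 := by
  have h1 : dotProduct (star (W.mulVec y)) (W.mulVec y)
      = dotProduct (star y) y := by
    rw [Matrix.star_mulVec, ← Matrix.dotProduct_mulVec, Matrix.mulVec_mulVec,
      (show W.conjTranspose * W = 1 by
        rw [← Matrix.star_eq_conjTranspose]; exact Matrix.mem_unitaryGroup_iff'.mp hW)]
    simp [Matrix.one_mulVec]
  rw [dot_self_eq, dot_self_eq] at h1
  exact_mod_cast h1

/-- the density of the K-dimensional standard complex Gaussian. -/
noncomputable def fK (x : Fin K → ℂ) : ℝ≥0∞ := ∏ i, f1 (x i)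

lemma fK_meas : Measurable (fK (K := K)) :=
  Finset.measurable_prod _ (fun i _ => f1_meas.comp (measurable_pi_apply i))

lemma fK_eq (x : Fin K → ℂ) :
    fK x = ENNReal.ofReal ((Real.pi⁻¹) ^ K * Real.exp (-(∑ i, ‖x i‖ ^ 2))) := by
  unfold fK f1
  have h : (Real.pi⁻¹)^K * Real.exp (-(∑ i, ‖x i‖^2))
      = ∏ i : Fin K, (Real.pi⁻¹ * Real.exp (-(‖x i‖^2))) := by
    rw [Finset.prod_mul_distrib, Finset.prod_const, Finset.card_univ, Fintype.card_fin,
      ← Real.exp_sum]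
    congr 1
    rw [← Finset.sum_neg_distrib]
  rw [h, ENNReal.ofReal_prod_of_nonneg (fun i _ => by positivity)]

/-- the K-dim standard complex Gaussian. -/
noncomputable def muK (K : ℕ) : Measure (Fin K → ℂ) :=
  Measure.pi fun _ : Fin K => complexGaussian 1

instance : IsProbabilityMeasure (muK K) := by
  unfold muK; infer_instance

lemma muK_eq : muK K = (volume : Measure (Fin K → ℂ)).withDensity fK := by
  unfold muK fK
  rw [MeasureTheory.volume_pi]
  simp_rw [complexGaussian_one_eq]
  exact pi_withDensity volume f1 f1_meas sigmaFinite_wd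

lemma map_mulVec_unitary (W : Matrix (Fin K) (Fin K) ℂ)
    (hW : W ∈ Matrix.unitaryGroup (Fin K) ℂ) :
    Measure.map (fun y => W.mulVec y) (muK K) = muK K := by
  classical
  -- linear equivalence over ℝ
  let f : (Fin K → ℂ) →ₗ[ℝ] (Fin K → ℂ) := (Matrix.mulVecLin W).restrictScalars ℝ
  let fi : (Fin K → ℂ) →ₗ[ℝ] (Fin K → ℂ) := (Matrix.mulVecLin (star W)).restrictScalars ℝ
  have hWW : W * star W = 1 := Matrix.mem_unitaryGroup_iff.mp hW
  have hWW' : star W * W = 1 := Matrix.mem_unitaryGroup_iff'.mp hW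
  let e : (Fin K → ℂ) ≃ₗ[ℝ] (Fin K → ℂ) :=
    LinearEquiv.ofLinear f fi
      (by
        apply LinearMap.ext; intro y
        simp only [f, fi, LinearMap.coe_comp, Function.comp_apply,
          LinearMap.coe_restrictScalars, Matrix.mulVecLin_apply, LinearMap.id_coe, id_eq]
        rw [Matrix.mulVec_mulVec, hWW, Matrix.one_mulVec])
      (by
        apply LinearMap.ext; intro y
        simp only [f, fi, LinearMap.coe_comp, Function.comp_apply,
          LinearMap.coe_restrictScalars, Matrix.mulVecLin_apply, LinearMap.id_coe, id_eq]
        rw [Matrix.mulVec_mulVec, hWW', Matrix.one_mulVec])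
  have hdet : LinearMap.det f ≠ 0 := by
    have : IsUnit (LinearMap.det (e : (Fin K → ℂ) →ₗ[ℝ] (Fin K → ℂ))) :=
      LinearEquiv.isUnit_det' e
    exact this.ne_zero
  let em : (Fin K → ℂ) ≃ᵐ (Fin K → ℂ) :=
    e.toContinuousLinearEquiv.toHomeomorph.toMeasurableEquiv
  have hcoe : (fun y => W.mulVec y) = ⇑em := rfl
  have hfcoe : ⇑em = ⇑f := rfl
  have hfKinv : (fun y => fK (em y)) = fK := by
    funext y
    have : fK (W.mulVec y) = fK y := by
      rw [fK_eq, fK_eq, sum_sq_mulVec_unitary W hW]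
    exact this
  have hmap : Measure.map (⇑em) (volume : Measure (Fin K → ℂ))
      = ENNReal.ofReal |(LinearMap.det f)⁻¹| • volume := by
    rw [hfcoe]
    exact Measure.map_linearMap_addHaar_eq_smul_addHaar volume hdet
  have key : Measure.map (⇑em) (muK K) = ENNReal.ofReal |(LinearMap.det f)⁻¹| • muK K := by
    rw [muK_eq]
    calc Measure.map (⇑em) (volume.withDensity fK)
        = Measure.map (⇑em) (volume.withDensity (fun y => fK (em y))) := by rw [hfKinv]
      _ = (Measure.map (⇑em) volume).withDensity fK := map_withDensity_equiv em _ _ fK_meas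
      _ = (ENNReal.ofReal |(LinearMap.det f)⁻¹| • volume).withDensity fK := by rw [hmap]
      _ = ENNReal.ofReal |(LinearMap.det f)⁻¹| • volume.withDensity fK :=
          withDensity_smul_measure _ _
  have hone : Measure.map (⇑em) (muK K) Set.univ = 1 := by
    rw [Measure.map_apply em.measurable MeasurableSet.univ]
    simp
  rw [key] at hone
  simp only [Measure.smul_apply, smul_eq_mul, measure_univ, mul_one] at hone
  rw [hcoe, key, hone, one_smul]

end Invariance

/-- tail bound for the standard complex Gaussian. -/
lemma cg_tail (δ : ℝ) (hδ : 0 ≤ δ) :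
    complexGaussian 1 {z : ℂ | ‖z‖ ^ 2 < δ} ≤ ENNReal.ofReal (4 * δ) := by
  set a := Real.sqrt δ with ha
  have hset : MeasurableSet {z : ℂ | ‖z‖ ^ 2 < δ} :=
    measurableSet_lt ((continuous_norm.pow 2).measurable) measurable_const
  have hG : gaussianReal 0 ((1:NNReal)/2) (Set.Ioo (-a) a) ≤ ENNReal.ofReal (2 * a) := by
    rw [gaussianReal_of_var_ne_zero 0 (by norm_num), withDensity_apply _ measurableSet_Ioo]
    calc ∫⁻ x in Set.Ioo (-a) a, gaussianPDF 0 (1/2) x ∂volume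
        ≤ ∫⁻ _ in Set.Ioo (-a) a, 1 ∂volume := lintegral_mono fun x => gaussianPDF_half_le_one x
      _ = volume (Set.Ioo (-a) a) := setLIntegral_one _
      _ = ENNReal.ofReal (2 * a) := by rw [Real.volume_Ioo]; congr 1; ring
  have hsub : Complex.measurableEquivRealProd.symm ⁻¹' {z : ℂ | ‖z‖ ^ 2 < δ}
      ⊆ (Set.Ioo (-a) a) ×ˢ (Set.Ioo (-a) a) := by
    intro p hp
    simp only [Set.mem_preimage, Set.mem_setOf_eq, Complex.sq_norm,
      Complex.measurableEquivRealProd_symm_apply, Complex.normSq_mk] at hp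
    have h1 : p.1 ^ 2 < δ := by nlinarith [mul_self_nonneg p.2]
    have h2 : p.2 ^ 2 < δ := by nlinarith [mul_self_nonneg p.1]
    have habs1 : |p.1| < a := by
      rw [← Real.sqrt_sq_eq_abs]; exact Real.sqrt_lt_sqrt (sq_nonneg _) h1
    have habs2 : |p.2| < a := by
      rw [← Real.sqrt_sq_eq_abs]; exact Real.sqrt_lt_sqrt (sq_nonneg _) h2
    rw [abs_lt] at habs1 habs2
    exact ⟨⟨habs1.1, habs1.2⟩, ⟨habs2.1, habs2.2⟩⟩
  calc complexGaussian 1 {z : ℂ | ‖z‖ ^ 2 < δ}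
      = ((gaussianReal 0 ((1:NNReal)/2)).prod (gaussianReal 0 ((1:NNReal)/2)))
          (Complex.measurableEquivRealProd.symm ⁻¹' {z : ℂ | ‖z‖ ^ 2 < δ}) := by
        unfold complexGaussian
        rw [Measure.map_apply Complex.measurableEquivRealProd.symm.measurable hset]
    _ ≤ ((gaussianReal 0 ((1:NNReal)/2)).prod (gaussianReal 0 ((1:NNReal)/2)))
          ((Set.Ioo (-a) a) ×ˢ (Set.Ioo (-a) a)) := measure_mono hsub
    _ = gaussianReal 0 ((1:NNReal)/2) (Set.Ioo (-a) a)
          * gaussianReal 0 ((1:NNReal)/2) (Set.Ioo (-a) a) := Measure.prod_prod _ _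
    _ ≤ ENNReal.ofReal (2 * a) * ENNReal.ofReal (2 * a) := mul_le_mul' hG hG
    _ = ENNReal.ofReal (4 * δ) := by
        rw [← ENNReal.ofReal_mul (by positivity)]
        congr 1
        have : a * a = δ := Real.mul_self_sqrt hδ
        nlinarith

section MatrixPart

variable {K : ℕ}

lemma measurable_mulVec (M : Matrix (Fin K) (Fin K) ℂ) :
    Measurable fun v : Fin K → ℂ => M.mulVec v := by
  apply measurable_pi_lambda
  intro k
  simpa [Matrix.mulVec, dotProduct] using
    Finset.measurable_sum Finset.univ (fun j (_ : j ∈ Finset.univ) =>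
      by fun_prop)

lemma sum_sq_SU (S : Matrix (Fin K) (Fin K) ℂ) (y : Fin K → ℂ) :
    ∑ k, ‖((S * ((Matrix.posSemidef_conjTranspose_mul_self S).1.eigenvectorUnitary
        : Matrix (Fin K) (Fin K) ℂ)).mulVec y) k‖ ^ 2
      = ∑ i, (Matrix.posSemidef_conjTranspose_mul_self S).1.eigenvalues i
          * ‖y i‖ ^ 2 := by
  classical
  set hM := (Matrix.posSemidef_conjTranspose_mul_self S).1
  set Uc : Matrix (Fin K) (Fin K) ℂ := (hM.eigenvectorUnitary : Matrix (Fin K) (Fin K) ℂ)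
  set d := hM.eigenvalues with hd
  set T := S * Uc with hTdef
  have h2 : T.conjTranspose * T = Matrix.diagonal (RCLike.ofReal ∘ d) := by
    rw [hTdef, Matrix.conjTranspose_mul]
    have hassoc : Uc.conjTranspose * S.conjTranspose * (S * Uc)
        = star Uc * (S.conjTranspose * S) * Uc := by
      rw [Matrix.star_eq_conjTranspose]
      simp only [Matrix.mul_assoc]
    rw [hassoc]
    simpa using hM.conjStarAlgAut_star_eigenvectorUnitary
  have h1 : dotProduct (star (T.mulVec y)) (T.mulVec y)
      = dotProduct (star y) ((T.conjTranspose * T).mulVec y) := by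
    rw [Matrix.star_mulVec, ← Matrix.dotProduct_mulVec, Matrix.mulVec_mulVec]
  have h3 : dotProduct (star y) ((Matrix.diagonal (RCLike.ofReal ∘ d)).mulVec y)
      = ((∑ i, d i * ‖y i‖ ^ 2 : ℝ) : ℂ) := by
    simp only [dotProduct, Matrix.mulVec_diagonal, Pi.star_apply, RCLike.star_def,
      Function.comp_apply]
    push_cast
    refine Finset.sum_congr rfl fun i _ => ?_
    rw [show (starRingEnd ℂ) (y i) * ((RCLike.ofReal (d i) : ℂ) * y i)
        = (RCLike.ofReal (d i) : ℂ) * ((starRingEnd ℂ) (y i) * y i) by ring,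
      Complex.conj_mul']
    rfl
  have := h1.trans (by rw [h2, h3])
  rw [dot_self_eq] at this
  exact_mod_cast this

lemma card_eigs (S R : Matrix (Fin K) (Fin K) ℂ) (hS : S * S.conjTranspose = R) :
    (Finset.univ.filter fun i =>
        (Matrix.posSemidef_conjTranspose_mul_self S).1.eigenvalues i ≠ 0).card = R.rank := by
  classical
  have h1 : (S.conjTranspose * S).rank = R.rank := by
    rw [Matrix.rank_conjTranspose_mul_self, ← hS, Matrix.rank_self_mul_conjTranspose]
  rw [← h1, (Matrix.posSemidef_conjTranspose_mul_self S).1.rank_eq_card_non_zero_eigs,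
    Fintype.card_subtype]

end MatrixPart

end Stmt19Aux

open Stmt19Aux

/-- Theorem 2: let `h ∼ CN(0, R)` be a `K`-dimensional circularly-symmetric
complex Gaussian vector (realized as `h = S·h̃` with `S Sᴴ = R` and `h̃` a
vector of i.i.d. standard complex Gaussians), where `R` is positive
semidefinite of rank `r` with positive eigenvalues `λ₁, …, λ_r` (the nonzero
eigenvalues of `R`), and let `γ* = max_k |h_k|²`. Then, as `γ̄ → ∞`,
`P(γ̄·γ* < γ_th) = O(γ̄^{−r}·γ_th^{r}/∏ᵢ λᵢ)`: the diversity order equals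
`r = rank(R)`. -/
theorem stmt19 {Ω : Type*} [MeasureSpace Ω] [IsProbabilityMeasure (ℙ : Measure Ω)]
    {K : ℕ} (hK : 0 < K) (R S : Matrix (Fin K) (Fin K) ℂ)
    (hR : R.PosSemidef) (hS : S * S.conjTranspose = R)
    (g : Ω → Fin K → ℂ) (hg : Measurable g)
    (hgdist : Measure.map g ℙ = Measure.pi fun _ : Fin K => complexGaussian 1)
    (h : Ω → Fin K → ℂ) (hh : h = fun ω => S.mulVec (g ω))
    (γth : ℝ) (hγth : 0 < γth) :
    (fun γbar : ℝ =>
        (ℙ {ω | γbar * (⨆ k : Fin K, ‖h ω k‖ ^ 2) < γth}).toReal)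
      =O[atTop] (fun γbar : ℝ =>
        γbar ^ (-(R.rank : ℝ)) * γth ^ (R.rank) /
          ∏ i ∈ Finset.univ.filter (fun i => hR.1.eigenvalues i ≠ 0),
            hR.1.eigenvalues i) := by
  classical
  subst hh
  have hKne : Nonempty (Fin K) := ⟨⟨0, hK⟩⟩
  set r := R.rank with hr
  set hM := (Matrix.posSemidef_conjTranspose_mul_self S).1 with hMdef
  set d : Fin K → ℝ := hM.eigenvalues with hd
  set Uc : Matrix (Fin K) (Fin K) ℂ := (hM.eigenvectorUnitary : Matrix (Fin K) (Fin K) ℂ)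
    with hUcdef
  set T : Finset (Fin K) := Finset.univ.filter (fun i => d i ≠ 0) with hTdef
  have hcard : T.card = r := card_eigs S R hS
  have hd0 : ∀ i, 0 ≤ d i := (Matrix.posSemidef_conjTranspose_mul_self S).eigenvalues_nonneg
  have hdpos : ∀ i ∈ T, 0 < d i := fun i hi =>
    lt_of_le_of_ne (hd0 i) (Ne.symm (Finset.mem_filter.mp hi).2)
  set C0 : ℝ := ∏ i ∈ T, (4 * K * γth / d i) with hC0
  have hC0pos : 0 < C0 :=
    Finset.prod_pos fun i hi => by
      have := hdpos i hi
      have hK' : (0:ℝ) < K := by exact_mod_cast hK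
      positivity
  set Λ : ℝ := ∏ i ∈ Finset.univ.filter (fun i => hR.1.eigenvalues i ≠ 0), hR.1.eigenvalues i
    with hΛ
  have hΛpos : 0 < Λ :=
    Finset.prod_pos fun i hi =>
      lt_of_le_of_ne (hR.eigenvalues_nonneg i) (Ne.symm (Finset.mem_filter.mp hi).2)
  -- the main pointwise bound
  have hbound : ∀ γbar : ℝ, 1 ≤ γbar →
      (ℙ {ω | γbar * (⨆ k : Fin K, ‖S.mulVec (g ω) k‖ ^ 2) < γth}).toReal
        ≤ C0 * γbar ^ (-(r : ℝ)) := by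
    intro γbar hγbar
    have hγpos : (0:ℝ) < γbar := lt_of_lt_of_le one_pos hγbar
    set ε := γth / γbar with hε
    have hεpos : 0 < ε := div_pos hγth hγpos
    set A : Set (Fin K → ℂ) := ⋂ k : Fin K, {v | ‖S.mulVec v k‖ ^ 2 < ε} with hA
    have hAmeas : MeasurableSet A := MeasurableSet.iInter fun k =>
      measurableSet_lt
        ((continuous_norm.measurable.comp ((measurable_pi_apply k).comp (measurable_mulVec S))).pow_const 2)
        measurable_const
    have hsub : {ω | γbar * (⨆ k : Fin K, ‖S.mulVec (g ω) k‖ ^ 2) < γth}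
        ⊆ g ⁻¹' A := by
      intro ω hω
      simp only [Set.mem_setOf_eq] at hω
      refine Set.mem_preimage.mpr (Set.mem_iInter.mpr fun k => ?_)
      have hle : ‖S.mulVec (g ω) k‖ ^ 2
          ≤ ⨆ k : Fin K, ‖S.mulVec (g ω) k‖ ^ 2 :=
        le_ciSup (f := fun k : Fin K => ‖S.mulVec (g ω) k‖ ^ 2)
          (Set.Finite.bddAbove (Set.finite_range _)) k
      have hlt : γbar * ‖S.mulVec (g ω) k‖ ^ 2 < γth :=
        lt_of_le_of_lt (by nlinarith) hω
      exact Set.mem_setOf_eq ▸ (lt_div_iff₀' hγpos).mpr hlt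
    have h1 : ℙ {ω | γbar * (⨆ k : Fin K, ‖S.mulVec (g ω) k‖ ^ 2) < γth}
        ≤ muK K A := by
      calc ℙ {ω | γbar * (⨆ k : Fin K, ‖S.mulVec (g ω) k‖ ^ 2) < γth}
          ≤ ℙ (g ⁻¹' A) := measure_mono hsub
        _ = Measure.map g ℙ A := (Measure.map_apply hg hAmeas).symm
        _ = muK K A := by rw [hgdist]; rfl
    have h2 : muK K A = muK K ((fun y => Uc.mulVec y) ⁻¹' A) := by
      conv_lhs => rw [← map_mulVec_unitary Uc (hM.eigenvectorUnitary).2]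
      rw [Measure.map_apply (measurable_mulVec Uc) hAmeas]
    set C : Fin K → Set ℂ := fun i =>
      if d i ≠ 0 then {z : ℂ | ‖z‖ ^ 2 < (K : ℝ) * ε / d i} else Set.univ with hC
    have h3 : ((fun y => Uc.mulVec y) ⁻¹' A) ⊆ Set.pi Set.univ C := by
      intro y hy
      have hy' : ∀ k, ‖(S * Uc).mulVec y k‖ ^ 2 < ε := by
        intro k
        have := Set.mem_iInter.mp hy k
        simpa [← Matrix.mulVec_mulVec] using this
      have hsum : ∑ i, d i * ‖y i‖ ^ 2 < (K : ℝ) * ε := by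
        rw [← sum_sq_SU S y]
        calc ∑ k, ‖(S * Uc).mulVec y k‖ ^ 2
            < ∑ _k : Fin K, ε :=
              Finset.sum_lt_sum_of_nonempty Finset.univ_nonempty (fun k _ => hy' k)
          _ = (K : ℝ) * ε := by
              rw [Finset.sum_const, Finset.card_univ, Fintype.card_fin, nsmul_eq_mul]
      intro i _
      simp only [hC]
      by_cases hdi : d i ≠ 0
      · rw [if_pos hdi]
        have hdipos : 0 < d i := lt_of_le_of_ne (hd0 i) (Ne.symm hdi)
        have hsingle : d i * ‖y i‖ ^ 2 ≤ ∑ j, d j * ‖y j‖ ^ 2 :=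
          Finset.single_le_sum (f := fun j => d j * ‖y j‖ ^ 2)
            (fun j _ => mul_nonneg (hd0 j) (by positivity)) (Finset.mem_univ i)
        exact Set.mem_setOf_eq ▸ (lt_div_iff₀' hdipos).mpr (lt_of_le_of_lt hsingle hsum)
      · rw [if_neg hdi]; trivial
    have h4 : muK K (Set.pi Set.univ C)
        ≤ ENNReal.ofReal (∏ i ∈ T, (4 * ((K : ℝ) * ε / d i))) := by
      have hpi : muK K (Set.pi Set.univ C) = ∏ i, complexGaussian 1 (C i) :=
        Measure.pi_pi _ _
      rw [hpi, ENNReal.ofReal_prod_of_nonneg (fun i hi => by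
        have := hdpos i hi; positivity)]
      rw [← Finset.prod_filter_mul_prod_filter_not Finset.univ (fun i => d i ≠ 0)]
      have hone : ∏ i ∈ Finset.univ.filter (fun i => ¬ d i ≠ 0), complexGaussian 1 (C i)
          = 1 := by
        refine Finset.prod_eq_one fun i hi => ?_
        have : C i = Set.univ := by
          simp only [hC]; rw [if_neg (Finset.mem_filter.mp hi).2]
        rw [this]
        exact measure_univ
      rw [show (Finset.univ.filter (fun i => d i ≠ 0)) = T from rfl, hone, mul_one]
      refine Finset.prod_le_prod' fun i hi => ?_
      have hdi := (Finset.mem_filter.mp hi).2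
      have hdipos := hdpos i hi
      have : C i = {z : ℂ | ‖z‖ ^ 2 < (K : ℝ) * ε / d i} := by
        simp only [hC]; rw [if_pos hdi]
      rw [this]
      exact cg_tail _ (by positivity)
    have hchain : ℙ {ω | γbar * (⨆ k : Fin K, ‖S.mulVec (g ω) k‖ ^ 2) < γth}
        ≤ ENNReal.ofReal (∏ i ∈ T, (4 * ((K : ℝ) * ε / d i))) :=
      h1.trans ((h2.le.trans (measure_mono h3)).trans h4)
    have hprod_eq : ∏ i ∈ T, (4 * ((K : ℝ) * ε / d i)) = C0 * γbar ^ (-(r : ℝ)) := by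
      have hstep : ∀ i ∈ T, 4 * ((K : ℝ) * ε / d i) = (4 * K * γth / d i) * γbar⁻¹ := by
        intro i hi
        have hdi := (hdpos i hi).ne'
        rw [hε]
        field_simp
      rw [Finset.prod_congr rfl hstep, Finset.prod_mul_distrib, Finset.prod_const, hcard]
      congr 1
      rw [Real.rpow_neg hγpos.le, Real.rpow_natCast, inv_pow]
    rw [hprod_eq] at hchain
    exact ENNReal.toReal_le_of_le_ofReal
      (by have := Real.rpow_pos_of_pos hγpos (-(r:ℝ)); positivity) hchain
  -- conclude
  rw [isBigO_iff]
  refine ⟨C0 * Λ / γth ^ r, ?_⟩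
  filter_upwards [eventually_ge_atTop (1 : ℝ)] with γbar hγbar
  have hγpos : (0:ℝ) < γbar := lt_of_lt_of_le one_pos hγbar
  have hrpow : (0:ℝ) < γbar ^ (-(r : ℝ)) := Real.rpow_pos_of_pos hγpos _
  have hrhs : (0:ℝ) < γbar ^ (-(r : ℝ)) * γth ^ r / Λ := by positivity
  rw [Real.norm_eq_abs, Real.norm_eq_abs, abs_of_nonneg ENNReal.toReal_nonneg, abs_of_pos hrhs]
  calc (ℙ {ω | γbar * (⨆ k : Fin K, ‖S.mulVec (g ω) k‖ ^ 2) < γth}).toReal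
      ≤ C0 * γbar ^ (-(r : ℝ)) := hbound γbar hγbar
    _ = C0 * Λ / γth ^ r * (γbar ^ (-(r : ℝ)) * γth ^ r / Λ) := by
        field_simp
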